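/- The function t ↦ f(t)/t is nonincreasing on (0, ∞). -/

import Mathlib

theorem stmt_15 (f : ℝ → ℝ) (hf0 : f 0 = 0) (hodd : ∀ t : ℝ, f (-t) = -f t)
    (hf1 : ∀ t : ℝ, 0 ≤ t → HasDerivAt f ((1 + 2 * f t ^ 2) ^ (-(1/2) : ℝ)) t) :
    AntitoneOn (fun t : ℝ => f t / t) (Set.Ioi 0) := by
  set f' : ℝ → ℝ := fun t => (1 + 2 * f t ^ 2) ^ (-(1/2) : ℝ) with hf'
  have hpos : ∀ t : ℝ, 0 < f' t := by
    intro t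
    apply Real.rpow_pos_of_pos
    positivity
  have hcont : ContinuousOn f (Set.Ici 0) := fun x hx =>
    ((hf1 x hx).continuousAt).continuousWithinAt
  have hmono : StrictMonoOn f (Set.Ici 0) := by
    apply strictMonoOn_of_deriv_pos (convex_Ici 0) hcont
    intro x hx
    rw [interior_Ici] at hx
    rw [(hf1 x hx.le).deriv]
    exact hpos x
  have hfnn : ∀ t : ℝ, 0 ≤ t → 0 ≤ f t := by
    intro t ht
    rcases eq_or_lt_of_le ht with h | h
    · rw [← h, hf0]
    · rw [← hf0]
      exact (hmono (Set.mem_Ici.mpr le_rfl) ht h).le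
  have hanti : ∀ s t : ℝ, 0 ≤ s → s ≤ t → f' t ≤ f' s := by
    intro s t hs hst
    apply Real.rpow_le_rpow_of_nonpos (by positivity)
    · have h1 : f s ≤ f t := (hmono.monotoneOn) hs (hs.trans hst) hst
      have h2 : f s ^ 2 ≤ f t ^ 2 := by
        apply pow_le_pow_left₀ (hfnn s hs) h1
      nlinarith
    · norm_num
  -- main argument
  intro a ha b hb hab
  simp only [Set.mem_Ioi] at ha hb
  rcases eq_or_lt_of_le hab with rfl | hab
  · exact le_rfl
  -- MVT on [0, a]
  obtain ⟨d, hd, hd'⟩ := exists_hasDerivAt_eq_slope f f' ha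
    (hcont.mono (by intro x hx; exact hx.1))
    (fun x hx => hf1 x hx.1.le)
  obtain ⟨c, hc, hc'⟩ := exists_hasDerivAt_eq_slope f f' hab
    (hcont.mono (by intro x hx; exact le_trans ha.le hx.1))
    (fun x hx => hf1 x (le_trans ha.le hx.1.le))
  rw [hf0] at hd'
  have hdc : f' c ≤ f' d := hanti d c hd.1.le (hd.2.le.trans hc.1.le)
  have hfb : f b = f a + f' c * (b - a) := by
    rw [hc']
    field_simp [sub_ne_zero.mpr hab.ne']
    ring
  have hfa : f a = f' d * a := by
    rw [hd']
    field_simp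
    ring
  have key : f b * a ≤ f a * b := by nlinarith [mul_le_mul_of_nonneg_right hdc (le_of_lt (mul_pos (sub_pos.mpr hab) ha)), hfa, hfb]
  simp only
  rw [div_le_div_iff₀ hb ha]
  linarith
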